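/- For every t₀ ∈ [0,2) there exist a point (a,b) lying in some member of 𝕊 and a real ε > 0 with t₀ + ε ≤ 2 such that f_𝕊(t₀) = (1 − t₀/2)·a + (t₀/2)·b and f_𝕊(s) = f_𝕊(t₀) − ((a − b)/2)·(s − t₀) for all s ∈ [t₀, t₀ + ε]. In particular, the right-hand slope of f_𝕊 at t₀ equals −(a−b)/2 for some lattice point (a,b) ∈ ⋃𝕊 realizing the value f_𝕊(t₀). -/

import Mathlib

/-- For every `t₀ ∈ [0,2)` there is a lattice point `(a,b)` lying in some member of `𝕊`
realizing the value `f t₀` and an `ε > 0` with `t₀ + ε ≤ 2` such that `f` is affine of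
slope `-(a-b)/2` on `[t₀, t₀ + ε]`. -/
theorem maxmin_right_slope
    (𝕊 : Finset (Finset (ℤ × ℤ))) (hS : 𝕊.Nonempty)
    (hSne : ∀ S ∈ 𝕊, S.Nonempty)
    (f : ℝ → ℝ)
    (hf : ∀ t : ℝ, f t =
      𝕊.attach.sup' (Finset.attach_nonempty_iff.mpr hS) fun S =>
        (S.1).inf' (hSne S.1 S.2) fun p =>
          (1 - t / 2) * (p.1 : ℝ) + (t / 2) * (p.2 : ℝ))
    (t₀ : ℝ) (ht₀ : t₀ ∈ Set.Ico (0 : ℝ) 2) :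
    ∃ (a b : ℤ) (S : Finset (ℤ × ℤ)), S ∈ 𝕊 ∧ (a, b) ∈ S ∧
      ∃ ε : ℝ, 0 < ε ∧ t₀ + ε ≤ 2 ∧
        f t₀ = (1 - t₀ / 2) * (a : ℝ) + (t₀ / 2) * (b : ℝ) ∧
        ∀ s ∈ Set.Icc t₀ (t₀ + ε),
          f s = f t₀ - (((a : ℝ) - (b : ℝ)) / 2) * (s - t₀) := by
  obtain ⟨ht0, ht2⟩ := ht₀
  set g : ℤ × ℤ → ℝ → ℝ := fun p t => (1 - t / 2) * (p.1 : ℝ) + (t / 2) * (p.2 : ℝ) with hg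
  have hf' : ∀ s : ℝ, f s = 𝕊.attach.sup' (Finset.attach_nonempty_iff.mpr hS)
      (fun S => (S.1).inf' (hSne S.1 S.2) (fun p => g p s)) := hf
  clear_value g
  set U : Finset (ℤ × ℤ) := 𝕊.biUnion id with hU
  have hmemU : ∀ {q : ℤ × ℤ} {T : Finset (ℤ × ℤ)}, T ∈ 𝕊 → q ∈ T → q ∈ U := by
    intro q T hT hq
    exact Finset.mem_biUnion.mpr ⟨T, hT, hq⟩
  have hUne : U.Nonempty := by
    obtain ⟨S, hSm⟩ := hS
    obtain ⟨p, hp⟩ := hSne S hSm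
    exact ⟨p, hmemU hSm hp⟩
  have hgd : ∀ (p : ℤ × ℤ) (s : ℝ),
      g p s = g p t₀ + (((p.2 : ℝ) - (p.1 : ℝ)) / 2) * (s - t₀) := by
    intro p s; simp only [hg]; ring
  set V := U ×ˢ U with hV
  have hVne : V.Nonempty := hUne.product hUne
  set ε : ℝ := min (2 - t₀) (V.inf' hVne fun pq =>
    if g pq.1 t₀ < g pq.2 t₀ then
      (g pq.2 t₀ - g pq.1 t₀) /
        (|(((pq.2.2 : ℝ) - (pq.2.1 : ℝ)) - (((pq.1.2 : ℝ) - (pq.1.1 : ℝ)))) / 2| + 1)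
    else 2 - t₀) with hε
  have h2t : (0 : ℝ) < 2 - t₀ := by linarith
  have hεpos : 0 < ε := by
    rw [hε]
    apply lt_min h2t
    rw [Finset.lt_inf'_iff]
    intro pq hpq
    by_cases h : g pq.1 t₀ < g pq.2 t₀
    · rw [if_pos h]
      apply div_pos (by linarith)
      positivity
    · rw [if_neg h]; exact h2t
  have hεle : t₀ + ε ≤ 2 := by
    have : ε ≤ 2 - t₀ := min_le_left _ _
    linarith
  -- strict order at t₀ persists on [t₀, t₀+ε]
  have key1 : ∀ p ∈ U, ∀ q ∈ U, g p t₀ < g q t₀ →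
      ∀ s ∈ Set.Icc t₀ (t₀ + ε), g p s < g q s := by
    intro p hp q hq hlt s hs
    obtain ⟨hs1, hs2⟩ := hs
    set c : ℝ := (((q.2 : ℝ) - (q.1 : ℝ)) - (((p.2 : ℝ) - (p.1 : ℝ)))) / 2 with hc
    have hεle' : ε ≤ (g q t₀ - g p t₀) / (|c| + 1) := by
      have hmem : (p, q) ∈ V := Finset.mem_product.mpr ⟨hp, hq⟩
      have := Finset.inf'_le (b := (p, q))
        (fun pq : (ℤ × ℤ) × ℤ × ℤ =>
          if g pq.1 t₀ < g pq.2 t₀ then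
            (g pq.2 t₀ - g pq.1 t₀) /
              (|(((pq.2.2 : ℝ) - (pq.2.1 : ℝ)) - (((pq.1.2 : ℝ) - (pq.1.1 : ℝ)))) / 2| + 1)
          else 2 - t₀) hmem
      rw [if_pos hlt] at this
      exact le_trans (min_le_right _ _) this
    have habs1 : -c ≤ |c| := neg_le_abs c
    have habs0 : (0 : ℝ) ≤ |c| := abs_nonneg c
    have hD : 0 < g q t₀ - g p t₀ := by linarith
    have h1' : (s - t₀) * (|c| + 1) ≤ g q t₀ - g p t₀ := by
      have hse : s - t₀ ≤ (g q t₀ - g p t₀) / (|c| + 1) := le_trans (by linarith) hεle'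
      calc (s - t₀) * (|c| + 1)
          ≤ ((g q t₀ - g p t₀) / (|c| + 1)) * (|c| + 1) :=
            mul_le_mul_of_nonneg_right hse (by positivity)
        _ = g q t₀ - g p t₀ := div_mul_cancel₀ _ (by positivity)
    have hq' := hgd q s
    have hp' := hgd p s
    have hexp : g q s - g p s = (g q t₀ - g p t₀) + c * (s - t₀) := by
      rw [hq', hp', hc]; ring
    nlinarith [mul_nonneg (sub_nonneg.mpr hs1) habs0]
  -- comparison at one interior point propagates
  have key : ∀ p ∈ U, ∀ q ∈ U, ∀ s ∈ Set.Ioc t₀ (t₀ + ε), g p s ≤ g q s →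
      ∀ s' ∈ Set.Icc t₀ (t₀ + ε), g p s' ≤ g q s' := by
    intro p hp q hq s hs hle s' hs'
    rcases lt_trichotomy (g p t₀) (g q t₀) with h | h | h
    · exact (key1 p hp q hq h s' hs').le
    · have hps := hgd p s
      have hqs := hgd q s
      have hps' := hgd p s'
      have hqs' := hgd q s'
      have hst : 0 < s - t₀ := sub_pos.mpr hs.1
      have hst' : 0 ≤ s' - t₀ := sub_nonneg.mpr hs'.1
      have hA : ((p.2 : ℝ) - p.1) / 2 * (s - t₀) ≤ ((q.2 : ℝ) - q.1) / 2 * (s - t₀) := by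
        linarith
      have hslope : ((p.2 : ℝ) - p.1) / 2 ≤ ((q.2 : ℝ) - q.1) / 2 :=
        (mul_le_mul_iff_of_pos_right hst).mp hA
      have := mul_le_mul_of_nonneg_right hslope hst'
      linarith
    · have := key1 q hq p hp h s ⟨hs.1.le, hs.2⟩
      exact absurd hle (not_le.mpr this)
  set s₁ : ℝ := t₀ + ε with hs₁def
  have hs₁mem : s₁ ∈ Set.Ioc t₀ (t₀ + ε) := ⟨by rw [hs₁def]; linarith, le_refl _⟩
  obtain ⟨S, -, hSmax⟩ := Finset.exists_mem_eq_sup' (Finset.attach_nonempty_iff.mpr hS)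
    (fun S : {x // x ∈ 𝕊} => (S.1).inf' (hSne S.1 S.2) fun p => g p s₁)
  obtain ⟨p, hpS, hpmin⟩ := Finset.exists_mem_eq_inf' (hSne S.1 S.2) (fun r => g r s₁)
  have hpU : p ∈ U := hmemU S.2 hpS
  have main : ∀ s' ∈ Set.Icc t₀ (t₀ + ε), f s' = g p s' := by
    intro s' hs'
    apply le_antisymm
    · rw [hf' s']
      apply Finset.sup'_le
      intro S' hS'
      obtain ⟨q, hqS', hqmin⟩ := Finset.exists_mem_eq_inf' (hSne S'.1 S'.2) (fun r => g r s₁)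
      have hqU : q ∈ U := hmemU S'.2 hqS'
      have h1 : g q s₁ ≤ g p s₁ := by
        rw [← hqmin, ← hpmin]
        calc (S'.1).inf' (hSne S'.1 S'.2) (fun r => g r s₁)
            ≤ 𝕊.attach.sup' (Finset.attach_nonempty_iff.mpr hS)
              (fun T : {x // x ∈ 𝕊} => (T.1).inf' (hSne T.1 T.2) fun r => g r s₁) :=
              Finset.le_sup' (fun T : {x // x ∈ 𝕊} => (T.1).inf' (hSne T.1 T.2) fun r => g r s₁) hS'
          _ = (S.1).inf' (hSne S.1 S.2) (fun r => g r s₁) := hSmax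
      have h2 := key q hqU p hpU s₁ hs₁mem h1 s' hs'
      exact le_trans (Finset.inf'_le _ hqS') h2
    · rw [hf' s']
      refine le_trans ?_ (Finset.le_sup' _ (Finset.mem_attach _ S))
      apply Finset.le_inf'
      intro q hq
      have hqU : q ∈ U := hmemU S.2 hq
      have h1 : g p s₁ ≤ g q s₁ := by
        rw [← hpmin]; exact Finset.inf'_le _ hq
      exact key p hpU q hqU s₁ hs₁mem h1 s' hs'
  have hft₀ : f t₀ = g p t₀ := main t₀ ⟨le_refl _, by linarith⟩
  refine ⟨p.1, p.2, S.1, S.2, by simpa using hpS, ε, hεpos, hεle, ?_, ?_⟩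
  · rw [hft₀, hg]
  · intro s hs
    rw [main s hs, hft₀, hgd p s]
    ring
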